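/- There exists a unique function V* : S → ℝ satisfying the Bellman equation V*(s) = R(s) + γ·max_{a∈A} Σ_{s'∈S} P(s,a,s')·V*(s') for all s ∈ S. -/

import Mathlib

open Finset

/-- Bellman operator of a finite discounted MDP. -/
noncomputable def bellman {S A : Type*} [Fintype S] [Fintype A] [Nonempty A]
    (R : S → ℝ) (P : S → A → S → ℝ) (γ : ℝ) (V : S → ℝ) (s : S) : ℝ :=
  R s + γ * Finset.univ.sup' Finset.univ_nonempty (fun a => ∑ s', P s a s' * V s')

lemma abs_sup'_sub_sup'_le {A : Type*} [Fintype A] [Nonempty A]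
    (f g : A → ℝ) (c : ℝ) (h : ∀ a, |f a - g a| ≤ c) :
    |Finset.univ.sup' Finset.univ_nonempty f - Finset.univ.sup' Finset.univ_nonempty g| ≤ c := by
  rw [abs_sub_le_iff]
  constructor <;>
  · apply sub_le_iff_le_add.2
    apply Finset.sup'_le
    intro a _
    have h1 := abs_sub_le_iff.mp (h a)
    have h2 := Finset.le_sup' g (Finset.mem_univ a)
    have h3 := Finset.le_sup' f (Finset.mem_univ a)
    linarith [h1.1, h1.2]

/-- There is a unique function satisfying the Bellman equation. -/
theorem bellman_exists_unique_fixed_point {S A : Type*}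
    [Fintype S] [Fintype A] [Nonempty S] [Nonempty A]
    (R : S → ℝ) (P : S → A → S → ℝ) (γ : ℝ)
    (hP0 : ∀ s a s', 0 ≤ P s a s') (hP1 : ∀ s a, ∑ s', P s a s' = 1)
    (hγ0 : 0 ≤ γ) (hγ1 : γ < 1) :
    ∃! Vstar : S → ℝ, ∀ s, Vstar s = bellman R P γ Vstar s := by
  have hK : ContractingWith (⟨γ, hγ0⟩ : NNReal) (bellman R P γ) := by
    constructor
    · exact_mod_cast hγ1
    · refine LipschitzWith.of_dist_le_mul ?_
      intro V W
      rw [dist_pi_le_iff (by positivity)]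
      intro s
      have key : ∀ a : A, |(∑ s', P s a s' * V s') - (∑ s', P s a s' * W s')| ≤ dist V W := by
        intro a
        rw [← Finset.sum_sub_distrib]
        calc |∑ s', (P s a s' * V s' - P s a s' * W s')|
            ≤ ∑ s', |P s a s' * V s' - P s a s' * W s'| := Finset.abs_sum_le_sum_abs _ _
          _ ≤ ∑ s', P s a s' * dist V W := by
              apply Finset.sum_le_sum
              intro s' _
              rw [← mul_sub, abs_mul, abs_of_nonneg (hP0 s a s')]
              have hd : |V s' - W s'| ≤ dist V W := by
                rw [← Real.dist_eq]; exact dist_le_pi_dist V W s'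
              exact mul_le_mul_of_nonneg_left hd (hP0 s a s')
          _ = dist V W := by rw [← Finset.sum_mul, hP1, one_mul]
      have := abs_sup'_sub_sup'_le (fun a => ∑ s', P s a s' * V s')
        (fun a => ∑ s', P s a s' * W s') (dist V W) key
      simp only [bellman, Real.dist_eq]
      have h2 : R s + γ * Finset.univ.sup' Finset.univ_nonempty (fun a => ∑ s', P s a s' * V s')
          - (R s + γ * Finset.univ.sup' Finset.univ_nonempty (fun a => ∑ s', P s a s' * W s'))
          = γ * (Finset.univ.sup' Finset.univ_nonempty (fun a => ∑ s', P s a s' * V s')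
            - Finset.univ.sup' Finset.univ_nonempty (fun a => ∑ s', P s a s' * W s')) := by ring
      rw [h2, abs_mul, abs_of_nonneg hγ0]
      exact mul_le_mul_of_nonneg_left this hγ0
  refine ⟨hK.fixedPoint (bellman R P γ), ?_, ?_⟩
  · intro s
    exact congrFun (ContractingWith.fixedPoint_isFixedPt hK).symm s
  · intro V hV
    exact hK.fixedPoint_unique (funext fun s => (hV s).symm)
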